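/- Let A and D be invertible complex matrices and B, C matrices of compatible sizes with D B = B A. Set Z = D − B A^{-1} C and s = ind(Z). Then (A − C D^{-1} B)^d = A^{-1} + A^{-1} C Z^d D^{-1} B − ∑_{i=0}^{s-1} A^{-i-2} C Z^i Z^π D^{-1} B. -/

import Mathlib

open Matrix Finset

open Polynomial

attribute [local instance] Classical.propDecidable

noncomputable def drazin {n : Type*} [Fintype n] [DecidableEq n]
    (A : Matrix n n ℂ) : Matrix n n ℂ :=
  if h : ∃ X : Matrix n n ℂ,
      A * X = X * A ∧ X * A * X = X ∧ ∃ k : ℕ, A ^ (k + 1) * X = A ^ k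
  then h.choose else 0

noncomputable def ind {n : Type*} [Fintype n] [DecidableEq n]
    (A : Matrix n n ℂ) : ℕ :=
  sInf {k : ℕ | (A ^ k).rank = (A ^ (k + 1)).rank}

noncomputable def spi {n : Type*} [Fintype n] [DecidableEq n]
    (A : Matrix n n ℂ) : Matrix n n ℂ :=
  1 - A * drazin A



section Unique
variable {R : Type*} [Ring R]

lemma drazin_unique_ring (A X Y : R)
    (hX1 : A * X = X * A) (hX2 : X * A * X = X) (hX3 : ∃ k, A ^ (k+1) * X = A ^ k)
    (hY1 : A * Y = Y * A) (hY2 : Y * A * Y = Y) (hY3 : ∃ k, A ^ (k+1) * Y = A ^ k) :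
    X = Y := by
  obtain ⟨k, hk⟩ := hX3
  obtain ⟨l, hl⟩ := hY3
  have cAX : Commute A X := hX1
  have cAY : Commute A Y := hY1
  have idXA : IsIdempotentElem (X * A) := by
    show X * A * (X * A) = X * A
    rw [← mul_assoc, hX2]
  have idAY : IsIdempotentElem (A * Y) := by
    show A * Y * (A * Y) = A * Y
    rw [mul_assoc A Y (A * Y), ← mul_assoc Y A Y, hY2]
  have hAX : ∀ j, A ^ (k + j + 1) * X = A ^ (k + j) := by
    intro j
    induction j with
    | zero => simpa using hk
    | succ j ih =>
        have e1 : k + (j+1) + 1 = (k + j + 1) + 1 := by omega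
        have e2 : k + (j+1) = (k + j) + 1 := by omega
        rw [e1, e2, pow_succ' A (k+j+1), mul_assoc, ih, ← pow_succ']
  have hAY : ∀ j, A ^ (l + j + 1) * Y = A ^ (l + j) := by
    intro j
    induction j with
    | zero => simpa using hl
    | succ j ih =>
        have e1 : l + (j+1) + 1 = (l + j + 1) + 1 := by omega
        have e2 : l + (j+1) = (l + j) + 1 := by omega
        rw [e1, e2, pow_succ' A (l+j+1), mul_assoc, ih, ← pow_succ']
  set N := k + l with hN
  have hNX : A ^ (N + 1) * X = A ^ N := hAX l
  have hNY : A ^ (N + 1) * Y = A ^ N := by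
    have := hAY k
    rwa [add_comm l k] at this
  have hXp : ∀ j, X ^ (j+1) * A ^ j = X := by
    intro j
    induction j with
    | zero => simp
    | succ j ih =>
        rw [pow_succ' X (j+1), pow_succ A j, mul_assoc,
          ← mul_assoc (X ^ (j+1)) (A ^ j) A, ih, ← hX1, ← mul_assoc, hX2]
  have hYp : ∀ j, A ^ j * Y ^ (j+1) = Y := by
    intro j
    induction j with
    | zero => simp
    | succ j ih =>
        rw [pow_succ Y (j+1), pow_succ' A j, mul_assoc,
          ← mul_assoc (A ^ j) (Y ^ (j+1)) Y, ih, ← mul_assoc, hY1, hY2]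
  have e1 : X = X * A * Y := by
    calc X = X ^ (N+1) * A ^ N := (hXp N).symm
    _ = X ^ (N+1) * (A ^ (N+1) * Y) := by rw [hNY]
    _ = (X ^ (N+1) * A ^ (N+1)) * Y := by rw [mul_assoc]
    _ = (X * A) ^ (N+1) * Y := by rw [← (cAX.symm).mul_pow]
    _ = (X * A) * Y := by rw [idXA.pow_succ_eq]
  have hswap : X * A ^ (N+1) = A ^ N := by
    rw [← (cAX.pow_left (N+1)).eq]; exact hNX
  have e2 : Y = X * (A * Y) := by
    calc Y = A ^ N * Y ^ (N+1) := (hYp N).symm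
    _ = (X * A ^ (N+1)) * Y ^ (N+1) := by rw [hswap]
    _ = X * (A ^ (N+1) * Y ^ (N+1)) := by rw [mul_assoc]
    _ = X * (A * Y) ^ (N+1) := by rw [← cAY.mul_pow]
    _ = X * (A * Y) := by rw [idAY.pow_succ_eq]
  calc X = X * A * Y := e1
  _ = X * (A * Y) := by rw [mul_assoc]
  _ = Y := e2.symm

end Unique

lemma exists_drazin {p : Type*} [Fintype p] [DecidableEq p] (A : Matrix p p ℂ) :
    ∃ X : Matrix p p ℂ,
      A * X = X * A ∧ X * A * X = X ∧ ∃ k : ℕ, A ^ (k + 1) * X = A ^ k := by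
  classical
  set P := A.charpoly with hP
  have hPne : P ≠ 0 := A.charpoly_monic.ne_zero
  set k := P.rootMultiplicity 0 with hk
  have hdvd := P.pow_rootMultiplicity_dvd 0
  simp only [map_zero, sub_zero] at hdvd
  obtain ⟨q, hq⟩ := hdvd
  have hnd := P.pow_rootMultiplicity_not_dvd hPne 0
  simp only [map_zero, sub_zero] at hnd
  have hXq : ¬ (X : ℂ[X]) ∣ q := by
    rintro ⟨r, hr⟩
    refine hnd ⟨r, ?_⟩
    conv_lhs => rw [hq, hr]
    ring
  have hirr : Irreducible (X : ℂ[X]) := Polynomial.prime_X.irreducible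
  have hcop : IsCoprime ((X : ℂ[X]) ^ k) q :=
    (hirr.coprime_iff_not_dvd.2 hXq).pow_left
  have hcop1 : IsCoprime (X : ℂ[X]) q := hirr.coprime_iff_not_dvd.2 hXq
  obtain ⟨a, b, hab⟩ := hcop
  obtain ⟨u, v, huv⟩ := hcop1
  set w : ℂ[X] := u * (a * X ^ k) with hw
  have hdvd1 : (X : ℂ[X]) ^ k ∣ w := ⟨u * a, by ring⟩
  have hdvd2 : q ∣ X * w - 1 := by
    have h1 : X * w - 1 = (u * X) * (a * X ^ k) - 1 := by ring
    have h2 : u * X = 1 - v * q := by linear_combination huv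
    have h3 : a * X ^ k = 1 - b * q := by linear_combination hab
    rw [h1, h2, h3]
    exact ⟨-(b + v * (1 - b * q)), by ring⟩
  have hPd : ∀ r : ℂ[X], P ∣ r → Polynomial.aeval A r = 0 := by
    rintro r ⟨t, ht⟩
    rw [ht, _root_.map_mul, hP, Matrix.aeval_self_charpoly, zero_mul]
  refine ⟨Polynomial.aeval A w, ?_, ?_, k, ?_⟩
  · calc A * Polynomial.aeval A w = Polynomial.aeval A (X * w) := by simp
    _ = Polynomial.aeval A (w * X) := by rw [mul_comm]
    _ = Polynomial.aeval A w * A := by simp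
  · have key : P ∣ w * X * w - w := by
      obtain ⟨w', hw'⟩ := hdvd1
      obtain ⟨t, ht⟩ := hdvd2
      refine ⟨w' * t, ?_⟩
      have h0 : w * X * w - w = w * (X * w - 1) := by ring
      rw [h0, ht, hw', hq]; ring
    have h1 := hPd _ key
    rw [_root_.map_sub, _root_.map_mul, _root_.map_mul] at h1
    simp only [Polynomial.aeval_X] at h1
    linear_combination (norm := noncomm_ring) h1
  · have key : P ∣ X ^ (k+1) * w - X ^ k := by
      obtain ⟨t, ht⟩ := hdvd2
      refine ⟨t, ?_⟩
      have h0 : (X : ℂ[X]) ^ (k+1) * w - X ^ k = X ^ k * (X * w - 1) := by ring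
      rw [h0, ht, hq]; ring
    have h1 := hPd _ key
    simp only [_root_.map_sub, _root_.map_mul, _root_.map_pow, Polynomial.aeval_X] at h1
    linear_combination (norm := noncomm_ring) h1

lemma pow_shift_aux {R : Type*} [Ring R] (A W : R) (k : ℕ)
    (h : A ^ (k+1) * W = A ^ k) (j : ℕ) : A ^ (k + j + 1) * W = A ^ (k + j) := by
  induction j with
  | zero => simpa using h
  | succ j ih =>
      have e1 : k + (j+1) + 1 = (k + j + 1) + 1 := by omega
      have e2 : k + (j+1) = (k + j) + 1 := by omega
      rw [e1, e2, pow_succ' A (k+j+1), mul_assoc, ih, ← pow_succ']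

lemma drazin_spec {p : Type*} [Fintype p] [DecidableEq p] (A : Matrix p p ℂ) :
    A * drazin A = drazin A * A ∧ drazin A * A * drazin A = drazin A ∧
      ∃ k, A ^ (k+1) * drazin A = A ^ k := by
  rw [drazin, dif_pos (exists_drazin A)]
  exact (exists_drazin A).choose_spec

lemma ind_rank {p : Type*} [Fintype p] [DecidableEq p] (A : Matrix p p ℂ) :
    (A ^ (ind A)).rank = (A ^ (ind A + 1)).rank := by
  have hne : {k : ℕ | (A ^ k).rank = (A ^ (k + 1)).rank}.Nonempty := by
    by_contra hc
    rw [Set.not_nonempty_iff_eq_empty] at hc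
    have hc' : ∀ k, (A ^ k).rank ≠ (A ^ (k+1)).rank := by
      intro k hk
      have : k ∈ {k : ℕ | (A ^ k).rank = (A ^ (k + 1)).rank} := hk
      rw [hc] at this
      exact this
    have hdec : ∀ k, (A ^ (k+1)).rank < (A ^ k).rank := by
      intro k
      refine lt_of_le_of_ne ?_ fun e => hc' k e.symm
      calc (A ^ (k+1)).rank = (A ^ k * A).rank := by rw [pow_succ]
      _ ≤ (A ^ k).rank := Matrix.rank_mul_le_left _ _
    have hb : ∀ k, (A ^ k).rank + k ≤ (A ^ 0).rank := by
      intro k; induction k with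
      | zero => simp
      | succ k ih => have := hdec k; omega
    have := hb ((A ^ 0).rank + 1)
    omega
  exact Nat.sInf_mem hne

lemma pow_ind_eq {p : Type*} [Fintype p] [DecidableEq p] (A : Matrix p p ℂ) :
    A ^ (ind A + 1) * drazin A = A ^ (ind A) := by
  obtain ⟨h1, h2, k, h3⟩ := drazin_spec A
  set Ad := drazin A with hAd
  set s := ind A with hs
  have cA : Commute A Ad := h1
  have hmap : ∀ t : ℕ, LinearMap.range ((A ^ (t+1)).mulVecLin) =
      Submodule.map A.mulVecLin (LinearMap.range ((A ^ t).mulVecLin)) := by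
    intro t
    rw [pow_succ', Matrix.mulVecLin_mul, LinearMap.range_comp]
  have heq1 : LinearMap.range ((A ^ (s+1)).mulVecLin) =
      LinearMap.range ((A ^ s).mulVecLin) := by
    have hle : LinearMap.range ((A ^ (s+1)).mulVecLin) ≤
        LinearMap.range ((A ^ s).mulVecLin) := by
      rw [pow_succ, Matrix.mulVecLin_mul]
      exact LinearMap.range_comp_le_range _ _
    apply Submodule.eq_of_le_of_finrank_le hle
    have hr := ind_rank A
    simp only [Matrix.rank] at hr
    exact hr.le
  have hstab : ∀ j, LinearMap.range ((A ^ (s + j)).mulVecLin) =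
      LinearMap.range ((A ^ s).mulVecLin) := by
    intro j
    induction j with
    | zero => rfl
    | succ j ih =>
        have e1 : s + (j+1) = (s + j) + 1 := rfl
        rw [e1, hmap, ih, ← hmap]
        exact heq1
  set N := s + k with hN
  have hcols : ∀ j : p, ∃ y : p → ℂ,
      (A ^ N).mulVecLin y = (A ^ s).mulVecLin (Pi.single j 1) := by
    intro j
    have hmem : (A ^ s).mulVecLin (Pi.single j 1) ∈
        LinearMap.range ((A ^ N).mulVecLin) := by
      rw [hstab k]
      exact LinearMap.mem_range_self _ _
    exact hmem
  choose y hy using hcols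
  set Y : Matrix p p ℂ := Matrix.of (fun i j => y j i) with hY
  have hfact : A ^ N * Y = A ^ s := by
    ext i j
    have h := congrFun (hy j) i
    simp only [Matrix.mulVecLin_apply, Matrix.mulVec_single, mul_one, Pi.smul_apply,
      MulOpposite.op_one, one_smul, Matrix.col_apply] at h
    calc (A ^ N * Y) i j = ∑ l, (A ^ N) i l * y j l := by
          simp [Matrix.mul_apply, hY]
    _ = (A ^ s) i j := by rw [← h]; simp [Matrix.mulVec, dotProduct]
  have hNk : A ^ (N + 1) * Ad = A ^ N := by
    have := pow_shift_aux A Ad k h3 s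
    rwa [show k + s = N by omega] at this
  calc A ^ (s+1) * Ad = Ad * A ^ (s+1) := (cA.pow_left (s+1)).eq
  _ = Ad * (A * A ^ s) := by rw [pow_succ']
  _ = (Ad * A) * A ^ s := by rw [mul_assoc]
  _ = (A * Ad) * A ^ s := by rw [h1]
  _ = (A * Ad) * (A ^ N * Y) := by rw [hfact]
  _ = (A * (Ad * A ^ N)) * Y := by noncomm_ring
  _ = (A * (A ^ N * Ad)) * Y := by rw [(cA.symm.pow_right N).eq]
  _ = (A ^ (N+1) * Ad) * Y := by rw [pow_succ', mul_assoc A (A ^ N) Ad]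
  _ = A ^ N * Y := by rw [hNk]
  _ = A ^ s := hfact

lemma pow_ind_spi {p : Type*} [Fintype p] [DecidableEq p] (A : Matrix p p ℂ) :
    A ^ (ind A) * spi A = 0 := by
  rw [spi, mul_sub, mul_one, ← mul_assoc, ← pow_succ, pow_ind_eq A, sub_self]

set_option maxHeartbeats 3200000 in
lemma key_calc {n m : ℕ} (A Ai : Matrix (Fin n) (Fin n) ℂ)
    (C : Matrix (Fin n) (Fin m) ℂ) (E : Matrix (Fin m) (Fin n) ℂ)
    (D Di Z Zd P : Matrix (Fin m) (Fin m) ℂ)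
    (S X : Matrix (Fin n) (Fin n) ℂ) (s : ℕ)
    (hA1 : A * Ai = 1) (hA2 : Ai * A = 1)
    (hD1 : D * Di = 1) (hD2 : Di * D = 1)
    (hEA : E * A = D * E)
    (hZ : Z = D - E * C)
    (hc : Z * Zd = Zd * Z) (hzz : Zd * Z * Zd = Zd)
    (hP : P = 1 - Z * Zd)
    (hZsP : Z ^ s * P = 0)
    (hS : S = A - C * E)
    (hX : X = Ai + Ai * C * Zd * E - ∑ i ∈ range s, Ai ^ (i + 2) * C * Z ^ i * P * E) :
    S * X = X * S ∧ X * S * X = X ∧ S ^ (s + 1) * X = S ^ s := by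
  -- basic derived relations
  have hEAi : E * Ai = Di * E := by
    calc E * Ai = (Di * D) * (E * Ai) := by rw [hD2, Matrix.one_mul]
    _ = Di * ((E * A) * Ai) := by rw [hEA]; simp only [Matrix.mul_assoc]
    _ = Di * (E * (A * Ai)) := by simp only [Matrix.mul_assoc]
    _ = Di * E := by rw [hA1, Matrix.mul_one]
  have hEAipow : ∀ j, E * Ai ^ j = Di ^ j * E := by
    intro j; induction j with
    | zero => simp
    | succ j ih =>
        calc E * Ai ^ (j+1) = (E * Ai ^ j) * Ai := by rw [pow_succ, ← Matrix.mul_assoc]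
        _ = Di ^ j * (E * Ai) := by rw [ih, Matrix.mul_assoc]
        _ = Di ^ j * (Di * E) := by rw [hEAi]
        _ = Di ^ (j+1) * E := by rw [pow_succ, Matrix.mul_assoc]
  have hEAx : ∀ (j : ℕ) (x : Matrix (Fin n) (Fin n) ℂ),
      E * (Ai ^ j * x) = Di ^ j * (E * x) := by
    intro j x; rw [← Matrix.mul_assoc, hEAipow, Matrix.mul_assoc]
  have hEC : E * C = D - Z := by rw [hZ, sub_sub_cancel]
  have hECx : ∀ (x : Matrix (Fin m) (Fin n) ℂ), E * (C * x) = D * x - Z * x := by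
    intro x; rw [← Matrix.mul_assoc, hEC, Matrix.sub_mul]
  have hDix : ∀ (j : ℕ) (y : Matrix (Fin m) (Fin n) ℂ),
      Di * (Di ^ j * y) = Di ^ (j+1) * y := by
    intro j y; rw [← Matrix.mul_assoc, ← pow_succ']
  have hDiDx : ∀ (j : ℕ) (y : Matrix (Fin m) (Fin n) ℂ),
      Di ^ (j+1) * (D * y) = Di ^ j * y := by
    intro j y; rw [← Matrix.mul_assoc, pow_succ, Matrix.mul_assoc (Di ^ j) Di D, hD2, Matrix.mul_one]
  have hZx : ∀ (j : ℕ) (u : Matrix (Fin m) (Fin n) ℂ),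
      Z * (Z ^ j * u) = Z ^ (j+1) * u := by
    intro j u; rw [← Matrix.mul_assoc, ← pow_succ']
  have hZsPx : ∀ (x : Matrix (Fin m) (Fin n) ℂ), Z ^ s * (P * x) = 0 := by
    intro x; rw [← Matrix.mul_assoc, hZsP, Matrix.zero_mul]
  have hZswap : ∀ (j : ℕ) (x : Matrix (Fin m) (Fin n) ℂ),
      Z ^ j * (Z * x) = Z * (Z ^ j * x) := by
    intro j x
    rw [← Matrix.mul_assoc, ((Commute.refl Z).pow_left j).eq, Matrix.mul_assoc]
  have hcc : Commute Z Zd := hc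
  have hPZc : Commute P Z := by
    rw [hP]; exact (Commute.one_left Z).sub_left ((Commute.refl Z).mul_left hcc.symm)
  have hPZ : P * Z = Z * P := hPZc.eq
  have hPZd : P * Zd = 0 := by rw [hP, Matrix.sub_mul, Matrix.one_mul, hc, hzz, sub_self]
  have hPZdx : ∀ (x : Matrix (Fin m) (Fin n) ℂ), P * (Zd * x) = 0 := by
    intro x; rw [← Matrix.mul_assoc, hPZd, Matrix.zero_mul]
  -- relations with S
  have hES : E * S = Z * E := by
    rw [hS, hZ, Matrix.mul_sub, Matrix.sub_mul, hEA, ← Matrix.mul_assoc]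
  have hSAi : S * Ai = 1 - C * (Di * E) := by
    rw [hS, Matrix.sub_mul, hA1, Matrix.mul_assoc, hEAi]
  have hAiS : Ai * S = 1 - Ai * C * E := by
    rw [hS, Matrix.mul_sub, hA2, ← Matrix.mul_assoc]
  have hSF : S * (Ai * C) = C * Di * Z := by
    calc S * (Ai * C) = (S * Ai) * C := by rw [Matrix.mul_assoc]
    _ = C - C * (Di * (E * C)) := by rw [hSAi, Matrix.sub_mul, Matrix.one_mul]; simp only [Matrix.mul_assoc]
    _ = C - C * (Di * (D - Z)) := by rw [hEC]
    _ = C - C * (Di * D) + C * (Di * Z) := by rw [Matrix.mul_sub, Matrix.mul_sub]; abel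
    _ = C * (Di * Z) := by rw [hD2, Matrix.mul_one, sub_self, zero_add]
    _ = C * Di * Z := by rw [Matrix.mul_assoc]
  -- rewrite X with successor-form exponents
  have hX' : X = Ai + Ai * C * Zd * E - ∑ i ∈ range s, Ai ^ (i+1+1) * C * Z ^ i * P * E := by
    rw [hX]
  set W := ∑ i ∈ range s, Ai ^ (i+1) * C * Z ^ i * P * E with hW
  -- generic term * S
  have hTSgen : ∀ (a b : ℕ), Ai ^ a * C * Z ^ b * P * E * S = Ai ^ a * C * Z ^ (b+1) * P * E := by
    intro a b
    calc Ai ^ a * C * Z ^ b * P * E * S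
        = Ai ^ a * (C * (Z ^ b * (P * (E * S)))) := by simp only [Matrix.mul_assoc]
      _ = Ai ^ a * (C * (Z ^ b * (P * (Z * E)))) := by rw [hES]
      _ = Ai ^ a * (C * (Z ^ b * ((P * Z) * E))) := by simp only [Matrix.mul_assoc]
      _ = Ai ^ a * (C * (Z ^ b * ((Z * P) * E))) := by rw [hPZ]
      _ = Ai ^ a * (C * (Z ^ b * (Z * (P * E)))) := by
            rw [Matrix.mul_assoc Z P E]
      _ = Ai ^ a * (C * (Z * (Z ^ b * (P * E)))) := by rw [hZswap]
      _ = Ai ^ a * C * Z ^ (b+1) * P * E := by rw [hZx]; simp only [Matrix.mul_assoc]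
  -- X * S
  have hXS : X * S = 1 - W := by
    rw [hX', Matrix.sub_mul, Matrix.add_mul, Matrix.sum_mul]
    have hmid : Ai * C * Zd * E * S = Ai * (C * ((Zd * Z) * E)) := by
      calc Ai * C * Zd * E * S = Ai * (C * (Zd * (E * S))) := by simp only [Matrix.mul_assoc]
      _ = Ai * (C * (Zd * (Z * E))) := by rw [hES]
      _ = Ai * (C * ((Zd * Z) * E)) := by simp only [Matrix.mul_assoc]
    rw [hAiS, hmid]
    have hsum1 : ∑ i ∈ range s, Ai ^ (i+1+1) * C * Z ^ i * P * E * S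
        = ∑ i ∈ range s, Ai ^ (i+1+1) * C * Z ^ (i+1) * P * E :=
      Finset.sum_congr rfl fun i _ => hTSgen (i+1+1) i
    rw [hsum1]
    have hgs : Ai ^ (s+1) * C * Z ^ s * P * E = 0 := by
      calc Ai ^ (s+1) * C * Z ^ s * P * E
          = Ai ^ (s+1) * (C * (Z ^ s * (P * E))) := by simp only [Matrix.mul_assoc]
        _ = 0 := by rw [hZsPx, Matrix.mul_zero, Matrix.mul_zero]
    have hsplit1 : ∑ i ∈ range (s+1), Ai ^ (i+1) * C * Z ^ i * P * E = W := by
      rw [Finset.sum_range_succ, hgs, add_zero]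
    have hsplit2 : ∑ i ∈ range (s+1), Ai ^ (i+1) * C * Z ^ i * P * E
        = (∑ i ∈ range s, Ai ^ (i+1+1) * C * Z ^ (i+1) * P * E)
            + Ai ^ (0+1) * C * Z ^ 0 * P * E := by
      rw [Finset.sum_range_succ']
    have hterm0 : Ai ^ (0+1) * C * Z ^ 0 * P * E
        = Ai * C * E - Ai * (C * ((Zd * Z) * E)) := by
      rw [hP, ← hc]
      simp only [zero_add, pow_one, pow_zero, Matrix.one_mul, Matrix.mul_one,
        Matrix.sub_mul, Matrix.mul_sub, Matrix.mul_assoc]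
    rw [← hsplit1, hsplit2, hterm0]
    abel
  -- S * X
  have hSX : S * X = 1 - W := by
    rw [hX', Matrix.mul_sub, Matrix.mul_add, Matrix.mul_sum]
    have h2 : S * (Ai * C * Zd * E) = C * Di * (Z * Zd) * E := by
      calc S * (Ai * C * Zd * E) = (S * (Ai * C)) * (Zd * E) := by simp only [Matrix.mul_assoc]
      _ = (C * Di * Z) * (Zd * E) := by rw [hSF]
      _ = C * Di * (Z * Zd) * E := by simp only [Matrix.mul_assoc]
    rw [hSAi, h2]
    have hST : ∀ i : ℕ, S * (Ai ^ (i+1+1) * C * Z ^ i * P * E)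
        = Ai ^ (i+1) * C * Z ^ i * P * E -
            (C * Di ^ (i+1) * Z ^ i * P * E - C * Di ^ (i+1+1) * Z ^ (i+1) * P * E) := by
      intro i
      calc S * (Ai ^ (i+1+1) * C * Z ^ i * P * E)
          = (S * Ai) * (Ai ^ (i+1) * (C * (Z ^ i * (P * E)))) := by
            rw [pow_succ' Ai (i+1)]; simp only [Matrix.mul_assoc]
        _ = (1 - C * (Di * E)) * (Ai ^ (i+1) * (C * (Z ^ i * (P * E)))) := by rw [hSAi]
        _ = Ai ^ (i+1) * (C * (Z ^ i * (P * E)))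
              - C * (Di * (E * (Ai ^ (i+1) * (C * (Z ^ i * (P * E)))))) := by
            rw [Matrix.sub_mul, Matrix.one_mul]; simp only [Matrix.mul_assoc]
        _ = Ai ^ (i+1) * (C * (Z ^ i * (P * E)))
              - C * (Di * (Di ^ (i+1) * (E * (C * (Z ^ i * (P * E)))))) := by rw [hEAx]
        _ = Ai ^ (i+1) * (C * (Z ^ i * (P * E)))
              - C * (Di ^ (i+1+1) * (D * (Z ^ i * (P * E)) - Z * (Z ^ i * (P * E)))) := by
            rw [hECx, hDix]
        _ = Ai ^ (i+1) * (C * (Z ^ i * (P * E)))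
              - (C * (Di ^ (i+1) * (Z ^ i * (P * E)))
                  - C * (Di ^ (i+1+1) * (Z ^ (i+1) * (P * E)))) := by
            rw [Matrix.mul_sub, hDiDx, hZx, Matrix.mul_sub]
        _ = Ai ^ (i+1) * C * Z ^ i * P * E -
            (C * Di ^ (i+1) * Z ^ i * P * E - C * Di ^ (i+1+1) * Z ^ (i+1) * P * E) := by
            simp only [Matrix.mul_assoc]
    have tele : ∑ i ∈ range s,
        (C * Di ^ (i+1) * Z ^ i * P * E - C * Di ^ (i+1+1) * Z ^ (i+1) * P * E)
        = C * Di ^ (0+1) * Z ^ 0 * P * E - C * Di ^ (s+1) * Z ^ s * P * E :=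
      Finset.sum_range_sub' (fun j => C * Di ^ (j+1) * Z ^ j * P * E) s
    rw [Finset.sum_congr rfl fun i _ => hST i, Finset.sum_sub_distrib, tele]
    have hus : C * Di ^ (s+1) * Z ^ s * P * E = 0 := by
      calc C * Di ^ (s+1) * Z ^ s * P * E
          = C * (Di ^ (s+1) * (Z ^ s * (P * E))) := by simp only [Matrix.mul_assoc]
        _ = 0 := by rw [hZsPx, Matrix.mul_zero, Matrix.mul_zero]
    have hu0 : C * Di ^ (0+1) * Z ^ 0 * P * E
        = C * (Di * E) - C * Di * (Z * Zd) * E := by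
      rw [hP]
      simp only [zero_add, pow_one, pow_zero, Matrix.one_mul, Matrix.mul_one,
        Matrix.sub_mul, Matrix.mul_sub, Matrix.mul_assoc]
    rw [hus, hu0]
    abel
  have hcomm : S * X = X * S := by rw [hSX, hXS]
  -- E * X
  have hEX : E * X = Zd * E := by
    rw [hX', Matrix.mul_sub, Matrix.mul_add, Matrix.mul_sum]
    have h2 : E * (Ai * C * Zd * E) = Zd * E - Di * (Z * (Zd * E)) := by
      calc E * (Ai * C * Zd * E) = E * (Ai ^ 1 * (C * (Zd * E))) := by
            rw [pow_one]; simp only [Matrix.mul_assoc]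
      _ = Di ^ 1 * (E * (C * (Zd * E))) := by rw [hEAx]
      _ = Di ^ 1 * (D * (Zd * E) - Z * (Zd * E)) := by rw [hECx]
      _ = (Di * D) * (Zd * E) - Di * (Z * (Zd * E)) := by
            rw [pow_one, Matrix.mul_sub]; simp only [Matrix.mul_assoc]
      _ = Zd * E - Di * (Z * (Zd * E)) := by rw [hD2, Matrix.one_mul]
    have hET : ∀ i : ℕ, E * (Ai ^ (i+1+1) * C * Z ^ i * P * E)
        = Di ^ (i+1) * Z ^ i * P * E - Di ^ (i+1+1) * Z ^ (i+1) * P * E := by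
      intro i
      calc E * (Ai ^ (i+1+1) * C * Z ^ i * P * E)
          = E * (Ai ^ (i+1+1) * (C * (Z ^ i * (P * E)))) := by simp only [Matrix.mul_assoc]
        _ = Di ^ (i+1+1) * (E * (C * (Z ^ i * (P * E)))) := by rw [hEAx]
        _ = Di ^ (i+1+1) * (D * (Z ^ i * (P * E)) - Z * (Z ^ i * (P * E))) := by rw [hECx]
        _ = Di ^ (i+1) * (Z ^ i * (P * E)) - Di ^ (i+1+1) * (Z ^ (i+1) * (P * E)) := by
            rw [Matrix.mul_sub, hDiDx, hZx]
        _ = Di ^ (i+1) * Z ^ i * P * E - Di ^ (i+1+1) * Z ^ (i+1) * P * E := by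
            simp only [Matrix.mul_assoc]
    have tele2 : ∑ i ∈ range s,
        (Di ^ (i+1) * Z ^ i * P * E - Di ^ (i+1+1) * Z ^ (i+1) * P * E)
        = Di ^ (0+1) * Z ^ 0 * P * E - Di ^ (s+1) * Z ^ s * P * E :=
      Finset.sum_range_sub' (fun j => Di ^ (j+1) * Z ^ j * P * E) s
    rw [hEAi, h2, Finset.sum_congr rfl fun i _ => hET i, tele2]
    have hvs : Di ^ (s+1) * Z ^ s * P * E = 0 := by
      calc Di ^ (s+1) * Z ^ s * P * E = Di ^ (s+1) * (Z ^ s * (P * E)) := by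
            simp only [Matrix.mul_assoc]
        _ = 0 := by rw [hZsPx, Matrix.mul_zero]
    rw [hvs, hP]
    simp only [zero_add, pow_one, pow_zero, Matrix.one_mul, Matrix.mul_one,
      Matrix.sub_mul, Matrix.mul_sub, Matrix.mul_assoc, sub_zero]
    abel
  -- W * X = 0
  have hWX : W * X = 0 := by
    rw [hW, Matrix.sum_mul]
    refine Finset.sum_eq_zero fun i _ => ?_
    calc Ai ^ (i+1) * C * Z ^ i * P * E * X
        = Ai ^ (i+1) * (C * (Z ^ i * (P * (E * X)))) := by simp only [Matrix.mul_assoc]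
      _ = Ai ^ (i+1) * (C * (Z ^ i * (P * (Zd * E)))) := by rw [hEX]
      _ = 0 := by rw [hPZdx, Matrix.mul_zero, Matrix.mul_zero, Matrix.mul_zero]
  have hXSX : X * S * X = X := by
    rw [hXS, Matrix.sub_mul, Matrix.one_mul, hWX, sub_zero]
  have hWpow : ∀ j, W * S ^ j = ∑ i ∈ range s, Ai ^ (i+1) * C * Z ^ (i+j) * P * E := by
    intro j
    induction j with
    | zero =>
        rw [pow_zero, Matrix.mul_one, hW]
        exact Finset.sum_congr rfl fun i _ => by simp
    | succ j ih =>
        calc W * S ^ (j+1) = (W * S ^ j) * S := by rw [pow_succ, ← Matrix.mul_assoc]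
        _ = (∑ i ∈ range s, Ai ^ (i+1) * C * Z ^ (i+j) * P * E) * S := by rw [ih]
        _ = ∑ i ∈ range s, Ai ^ (i+1) * C * Z ^ (i+j+1) * P * E := by
              rw [Matrix.sum_mul]
              exact Finset.sum_congr rfl fun i _ => hTSgen (i+1) (i+j)
        _ = ∑ i ∈ range s, Ai ^ (i+1) * C * Z ^ (i+(j+1)) * P * E :=
              Finset.sum_congr rfl fun i _ => by rw [Nat.add_assoc]
  have hWSs : W * S ^ s = 0 := by
    rw [hWpow s]
    refine Finset.sum_eq_zero fun i _ => ?_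
    calc Ai ^ (i+1) * C * Z ^ (i+s) * P * E
        = Ai ^ (i+1) * (C * (Z ^ i * (Z ^ s * (P * E)))) := by
          rw [pow_add Z i s]; simp only [Matrix.mul_assoc]
      _ = 0 := by rw [hZsPx, Matrix.mul_zero, Matrix.mul_zero, Matrix.mul_zero]
  have e1 : 1 - S * X = W := by rw [hSX, sub_sub_cancel]
  have hSWc : Commute S W := by
    show S * W = W * S
    calc S * W = S * (1 - S * X) := by rw [e1]
    _ = S - S * (S * X) := by rw [Matrix.mul_sub, Matrix.mul_one]
    _ = S - S * (X * S) := by rw [hcomm]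
    _ = S - (S * X) * S := by rw [← Matrix.mul_assoc]
    _ = (1 - S * X) * S := by rw [Matrix.sub_mul, Matrix.one_mul]
    _ = W * S := by rw [e1]
  have hG3 : S ^ (s+1) * X = S ^ s := by
    calc S ^ (s+1) * X = S ^ s * (S * X) := by rw [pow_succ, Matrix.mul_assoc]
    _ = S ^ s * (1 - W) := by rw [hSX]
    _ = S ^ s - S ^ s * W := by rw [Matrix.mul_sub, Matrix.mul_one]
    _ = S ^ s - W * S ^ s := by rw [(hSWc.pow_left s).eq]
    _ = S ^ s := by rw [hWSs, sub_zero]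
  exact ⟨hcomm, hXSX, hG3⟩

theorem stmt17 {n m : ℕ} (A : Matrix (Fin n) (Fin n) ℂ) (D : Matrix (Fin m) (Fin m) ℂ)
    (C : Matrix (Fin n) (Fin m) ℂ) (B : Matrix (Fin m) (Fin n) ℂ)
    (hA : IsUnit A) (hD : IsUnit D) (h : D * B = B * A)
    (Z : Matrix (Fin m) (Fin m) ℂ) (hZ : Z = D - B * A⁻¹ * C) :
    drazin (A - C * D⁻¹ * B) = A⁻¹ + A⁻¹ * C * drazin Z * D⁻¹ * B -
      ∑ i ∈ range (ind Z), A⁻¹ ^ (i + 2) * C * Z ^ i * spi Z * D⁻¹ * B := by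
  have hAd : IsUnit A.det := (Matrix.isUnit_iff_isUnit_det A).1 hA
  have hDd : IsUnit D.det := (Matrix.isUnit_iff_isUnit_det D).1 hD
  have hA1 : A * A⁻¹ = 1 := Matrix.mul_nonsing_inv A hAd
  have hA2 : A⁻¹ * A = 1 := Matrix.nonsing_inv_mul A hAd
  have hD1 : D * D⁻¹ = 1 := Matrix.mul_nonsing_inv D hDd
  have hD2 : D⁻¹ * D = 1 := Matrix.nonsing_inv_mul D hDd
  have hBA : B * A⁻¹ = D⁻¹ * B := by
    calc B * A⁻¹ = (D⁻¹ * D) * B * A⁻¹ := by rw [hD2, Matrix.one_mul]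
    _ = D⁻¹ * (D * B) * A⁻¹ := by rw [Matrix.mul_assoc D⁻¹ D B]
    _ = D⁻¹ * (B * A) * A⁻¹ := by rw [h]
    _ = D⁻¹ * B * (A * A⁻¹) := by simp only [Matrix.mul_assoc]
    _ = D⁻¹ * B := by rw [hA1, Matrix.mul_one]
  have hEA : (D⁻¹ * B) * A = D * (D⁻¹ * B) := by
    calc (D⁻¹ * B) * A = D⁻¹ * (B * A) := by rw [Matrix.mul_assoc]
    _ = D⁻¹ * (D * B) := by rw [← h]
    _ = (D⁻¹ * D) * B := by rw [Matrix.mul_assoc]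
    _ = B := by rw [hD2, Matrix.one_mul]
    _ = (D * D⁻¹) * B := by rw [hD1, Matrix.one_mul]
    _ = D * (D⁻¹ * B) := by rw [Matrix.mul_assoc]
  have hZE : Z = D - (D⁻¹ * B) * C := by
    rw [hZ, hBA]
  obtain ⟨hz1, hz2, kz, hz3⟩ := drazin_spec Z
  have hSS : A - C * D⁻¹ * B = A - C * (D⁻¹ * B) := by rw [Matrix.mul_assoc]
  have hXeq : A⁻¹ + A⁻¹ * C * drazin Z * D⁻¹ * B -
      ∑ i ∈ range (ind Z), A⁻¹ ^ (i + 2) * C * Z ^ i * spi Z * D⁻¹ * B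
      = A⁻¹ + A⁻¹ * C * drazin Z * (D⁻¹ * B) -
        ∑ i ∈ range (ind Z), A⁻¹ ^ (i + 2) * C * Z ^ i * spi Z * (D⁻¹ * B) := by
    rw [Finset.sum_congr rfl fun i _ =>
        Matrix.mul_assoc (A⁻¹ ^ (i + 2) * C * Z ^ i * spi Z) D⁻¹ B,
      Matrix.mul_assoc (A⁻¹ * C * drazin Z) D⁻¹ B]
  obtain ⟨g1, g2, g3⟩ := key_calc A A⁻¹ C (D⁻¹ * B) D D⁻¹ Z (drazin Z) (spi Z)
    (A - C * D⁻¹ * B)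
    (A⁻¹ + A⁻¹ * C * drazin Z * D⁻¹ * B -
      ∑ i ∈ range (ind Z), A⁻¹ ^ (i + 2) * C * Z ^ i * spi Z * D⁻¹ * B)
    (ind Z) hA1 hA2 hD1 hD2 hEA hZE hz1 hz2 rfl (pow_ind_spi Z) hSS hXeq
  obtain ⟨hs1, hs2, ks, hs3⟩ := drazin_spec (A - C * D⁻¹ * B)
  exact drazin_unique_ring (A - C * D⁻¹ * B) _ _ hs1 hs2 ⟨ks, hs3⟩ g1 g2 ⟨ind Z, g3⟩
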